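/- For any n points z_1, ..., z_n on the complex unit circle, there exists z_0 of modulus 1 such that the product over j of |z_0 - z_j| is at least 2; equivalently, the minimum over z ∈ T of the product of 1/|z - z_j| is at most 1/2. -/

import Mathlib

set_option maxRecDepth 4000

open Polynomial Finset

/-- For any n points z₁, …, zₙ on the unit circle there exists z₀ of modulus 1 with
∏ⱼ |z₀ - zⱼ| ≥ 2; equivalently ∏ⱼ 1/|z₀ - zⱼ| ≤ 1/2. -/
theorem chebyshev_L0_unit_circle (n : ℕ) (hn : 0 < n) (z : Fin n → ℂ)
    (hz : ∀ j, ‖z j‖ = 1) :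
    ∃ z₀ : ℂ, ‖z₀‖ = 1 ∧ 2 ≤ ∏ j, ‖z₀ - z j‖ ∧
      ∏ j, 1 / ‖z₀ - z j‖ ≤ 1 / 2 := by
  have hnC : (n : ℂ) ≠ 0 := Nat.cast_ne_zero.mpr hn.ne'
  set c : ℂ := (-1) ^ n * ∏ j, z j with hc
  have hcabs : ‖c‖ = 1 := by
    simp [hc, map_mul, map_prod, map_pow, hz]
  have hc0 : c ≠ 0 := by
    intro h; rw [h] at hcabs; simp at hcabs
  set ζ : ℂ := Complex.exp (Complex.log c / n) with hζ
  have hζn : ζ ^ n = c := by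
    rw [hζ, ← Complex.exp_nat_mul, mul_div_cancel₀ _ hnC, Complex.exp_log hc0]
  have hζabs : ‖ζ‖ = 1 := by
    rw [hζ, Complex.norm_exp]
    have : (Complex.log c / n).re = 0 := by
      simp [Complex.div_re, Complex.log_re, hcabs]
    rw [this, Real.exp_zero]
  set ω : ℂ := Complex.exp (2 * Real.pi * Complex.I / n) with hω
  have hωprim : IsPrimitiveRoot ω n := Complex.isPrimitiveRoot_exp n hn.ne'
  have hωabs : ‖ω‖ = 1 := by
    have hω' : ω = Complex.exp (((2 * Real.pi / n : ℝ) : ℂ) * Complex.I) := by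
      rw [hω]; congr 1; push_cast; ring
    rw [hω', Complex.norm_exp_ofReal_mul_I]
  set p : ℂ[X] := ∏ j, (X - C (z j)) with hp
  have hmonic : p.Monic := monic_prod_of_monic _ _ fun j _ => monic_X_sub_C (z j)
  have hdeg : p.natDegree = n := by
    simp [hp, natDegree_prod_of_monic _ _ (fun j _ => monic_X_sub_C (z j)), natDegree_X_sub_C]
  have hcoeff0 : p.coeff 0 = c := by
    rw [coeff_zero_eq_eval_zero, hp, eval_prod]
    simp only [eval_sub, eval_X, eval_C]
    rw [hc]
    have hneg : ∀ j : Fin n, (0 : ℂ) - z j = (-1) * z j := fun j => by ring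
    rw [Finset.prod_congr rfl fun j _ => hneg j, Finset.prod_mul_distrib,
      Finset.prod_const, Finset.card_univ, Fintype.card_fin]
  have hcoeffn : p.coeff n = 1 := by
    rw [← hdeg]; exact hmonic.coeff_natDegree
  -- key sum
  have key : ∑ k ∈ range n, p.eval (ζ * ω ^ k) = 2 * n * c := by
    have heval : ∀ x : ℂ, p.eval x = ∑ m ∈ range (n + 1), p.coeff m * x ^ m :=
      fun x => eval_eq_sum_range' (by omega) x
    calc ∑ k ∈ range n, p.eval (ζ * ω ^ k)
        = ∑ k ∈ range n, ∑ m ∈ range (n + 1), p.coeff m * ζ ^ m * (ω ^ m) ^ k := by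
          refine Finset.sum_congr rfl fun k _ => ?_
          rw [heval]
          refine Finset.sum_congr rfl fun m _ => ?_
          rw [mul_pow, ← pow_mul, ← pow_mul, mul_comm k m]
          ring
      _ = ∑ m ∈ range (n + 1), p.coeff m * ζ ^ m * ∑ k ∈ range n, (ω ^ m) ^ k := by
          rw [Finset.sum_comm]
          exact Finset.sum_congr rfl fun m _ => by rw [Finset.mul_sum]
      _ = 2 * n * c := by
          rw [Finset.sum_range_succ]
          have hlast : p.coeff n * ζ ^ n * ∑ k ∈ range n, (ω ^ n) ^ k = n * c := by
            rw [hcoeffn, hζn, hωprim.pow_eq_one]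
            simp [mul_comm]
          have hrest : ∑ m ∈ range n, p.coeff m * ζ ^ m * ∑ k ∈ range n, (ω ^ m) ^ k
              = n * c := by
            rw [Finset.sum_eq_single_of_mem 0 (Finset.mem_range.mpr hn)]
            · rw [hcoeff0]; simp [mul_comm]
            · intro m hm hm0
              have h1 : ω ^ m ≠ 1 :=
                hωprim.pow_ne_one_of_pos_of_lt hm0 (Finset.mem_range.mp hm)
              rw [geom_sum_eq h1, ← pow_mul, mul_comm m n, pow_mul, hωprim.pow_eq_one]
              simp
          rw [hlast, hrest]; ring
  -- pigeonhole
  have habs : (2 * n : ℝ) ≤ ∑ k ∈ range n, ‖p.eval (ζ * ω ^ k)‖ := by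
    calc (2 * n : ℝ) = ‖2 * n * c‖ := by
          rw [norm_mul, norm_mul, hcabs]; simp
      _ = ‖∑ k ∈ range n, p.eval (ζ * ω ^ k)‖ := by rw [key]
      _ ≤ ∑ k ∈ range n, ‖p.eval (ζ * ω ^ k)‖ := norm_sum_le _ _
  obtain ⟨k, hk, hk2⟩ : ∃ k ∈ range n, (2 : ℝ) ≤ ‖p.eval (ζ * ω ^ k)‖ := by
    apply Finset.exists_le_of_sum_le ⟨0, Finset.mem_range.mpr hn⟩
    calc ∑ _k ∈ range n, (2 : ℝ) = 2 * n := by simp [mul_comm]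
      _ ≤ _ := habs
  refine ⟨ζ * ω ^ k, ?_, ?_, ?_⟩
  · rw [norm_mul, norm_pow, hζabs, hωabs]; simp
  · have : p.eval (ζ * ω ^ k) = ∏ j, (ζ * ω ^ k - z j) := by
      rw [hp, eval_prod]; simp
    rw [this, norm_prod] at hk2
    exact hk2
  · have hev : p.eval (ζ * ω ^ k) = ∏ j, (ζ * ω ^ k - z j) := by
      rw [hp, eval_prod]; simp
    rw [hev, norm_prod] at hk2
    have heq : ∏ j, 1 / ‖ζ * ω ^ k - z j‖
        = 1 / ∏ j, ‖ζ * ω ^ k - z j‖ := by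
      rw [Finset.prod_div_distrib]; simp
    rw [heq]
    exact one_div_le_one_div_of_le two_pos hk2
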